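/- Let F : ℝ^d → ℝ be differentiable with L-Lipschitz gradient, Ψ proper convex lsc, Φ = F + Ψ, η > 0. Given x ∈ dom Ψ, v ∈ ℝ^d, set x̃ = prox_Ψ^η(x − ηv) and x⁺ = x + γ(x̃ − x) for some γ ∈ [0,1]. Then Φ(x⁺) ≤ Φ(x) − (γ/η − Lγ²)‖x̃ − x‖² + (1/(2L))‖F'(x) − v‖². -/

import Mathlib

open scoped RealInnerProductSpace

lemma descent_aux {E : Type*} [NormedAddCommGroup E] [InnerProductSpace ℝ E] [CompleteSpace E]
    (F : E → ℝ) (L : ℝ) (hL : 0 < L) (hF : Differentiable ℝ F)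
    (hFlip : ∀ a b, ‖gradient F a - gradient F b‖ ≤ L * ‖a - b‖)
    (x h : E) : F (x + h) ≤ F x + ⟪gradient F x, h⟫ + L / 2 * ‖h‖ ^ 2 := by
  have hgcont : Continuous (gradient F) := by
    have : LipschitzWith (Real.toNNReal L) (gradient F) := by
      refine LipschitzWith.of_dist_le_mul fun a b => ?_
      simpa [dist_eq_norm, Real.coe_toNNReal _ hL.le] using hFlip a b
    exact this.continuous
  have hderiv : ∀ t : ℝ, HasDerivAt (fun t : ℝ => F (x + t • h))
      ⟪gradient F (x + t • h), h⟫ t := by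
    intro t
    have h1 : HasDerivAt (fun t : ℝ => x + t • h) h t := by
      simpa using ((hasDerivAt_id t).smul_const h).const_add x
    have h2 : HasFDerivAt F (InnerProductSpace.toDual ℝ E (gradient F (x + t • h)))
        (x + t • h) := ((hF (x + t • h)).hasGradientAt).hasFDerivAt
    simpa [Function.comp_def, InnerProductSpace.toDual_apply_apply] using (h2.comp_hasDerivAt t h1)
  have hcont : Continuous fun t : ℝ => ⟪gradient F (x + t • h), h⟫ :=
    Continuous.inner (hgcont.comp (continuous_const.add (continuous_id.smul continuous_const)))
      continuous_const
  have hint : ∀ t : ℝ, IntervalIntegrable (fun t : ℝ => ⟪gradient F (x + t • h), h⟫)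
      MeasureTheory.volume 0 t := fun t => hcont.intervalIntegrable _ _
  have key : F (x + h) - F x = ∫ t in (0:ℝ)..1, ⟪gradient F (x + t • h), h⟫ := by
    have := intervalIntegral.integral_eq_sub_of_hasDerivAt
      (fun t _ => hderiv t) (hint 1)
    simpa using this.symm
  have hmono : (∫ t in (0:ℝ)..1, ⟪gradient F (x + t • h), h⟫)
      ≤ ∫ t in (0:ℝ)..1, (⟪gradient F x, h⟫ + L * t * ‖h‖ ^ 2) := by
    apply intervalIntegral.integral_mono_on (by norm_num) (hint 1)
    · exact (Continuous.intervalIntegrable (by continuity) _ _)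
    · intro t ht
      have h1 : ⟪gradient F (x + t • h) - gradient F x, h⟫ ≤ L * t * ‖h‖ ^ 2 := by
        calc ⟪gradient F (x + t • h) - gradient F x, h⟫
            ≤ ‖gradient F (x + t • h) - gradient F x‖ * ‖h‖ := real_inner_le_norm _ _
          _ ≤ (L * ‖(x + t • h) - x‖) * ‖h‖ := by
              apply mul_le_mul_of_nonneg_right (hFlip _ _) (norm_nonneg _)
          _ = L * t * ‖h‖ ^ 2 := by
              simp [norm_smul, abs_of_nonneg ht.1]; ring
      have := inner_sub_left (𝕜 := ℝ) (gradient F (x + t • h)) (gradient F x) h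
      rw [this] at h1
      linarith
  have hval : (∫ t in (0:ℝ)..1, (⟪gradient F x, h⟫ + L * t * ‖h‖ ^ 2))
      = ⟪gradient F x, h⟫ + L / 2 * ‖h‖ ^ 2 := by
    rw [intervalIntegral.integral_add (by simp)
      (Continuous.intervalIntegrable (by continuity) _ _)]
    have h1 : (∫ t in (0:ℝ)..1, L * t * ‖h‖ ^ 2) = L / 2 * ‖h‖ ^ 2 := by
      have he : (fun t : ℝ => L * t * ‖h‖ ^ 2) = fun t => (L * ‖h‖ ^ 2) * t := by
        funext t; ring
      rw [he, intervalIntegral.integral_const_mul, integral_id]; ring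
    rw [h1]; simp
  linarith [key, hmono, hval]

lemma tend_aux {A B K : ℝ} (hK : 0 ≤ K) (h : ∀ t : ℝ, 0 < t → t ≤ 1 → A ≤ B + t * K) :
    A ≤ B := by
  refine le_of_forall_pos_le_add fun ε hε => ?_
  have ht0 : 0 < min 1 (ε / (K + 1)) := lt_min one_pos (by positivity)
  have := h _ ht0 (min_le_left _ _)
  have h2 : min 1 (ε / (K + 1)) * K ≤ ε := by
    calc min 1 (ε / (K + 1)) * K ≤ (ε / (K + 1)) * K :=
          mul_le_mul_of_nonneg_right (min_le_right _ _) hK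
      _ ≤ ε := by
          rw [div_mul_eq_mul_div, div_le_iff₀ (by positivity)]
          nlinarith
  linarith

theorem npag_descent_lemma (d : ℕ) (F : EuclideanSpace ℝ (Fin d) → ℝ)
    (Ψ : EuclideanSpace ℝ (Fin d) → EReal) (L η γ : ℝ)
    (hL : 0 < L) (hη : 0 < η) (hγ0 : 0 ≤ γ) (hγ1 : γ ≤ 1)
    (hF : Differentiable ℝ F)
    (hFlip : ∀ a b, ‖gradient F a - gradient F b‖ ≤ L * ‖a - b‖)
    (hne_bot : ∀ z, Ψ z ≠ ⊥) (hne_top : ∃ z, Ψ z ≠ ⊤)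
    (hconv : ∀ (a b : EuclideanSpace ℝ (Fin d)) (t : ℝ), 0 ≤ t → t ≤ 1 →
      Ψ (t • a + (1 - t) • b) ≤ (t : EReal) * Ψ a + ((1 - t : ℝ) : EReal) * Ψ b)
    (hlsc : LowerSemicontinuous Ψ)
    (x v xt : EuclideanSpace ℝ (Fin d)) (hx : Ψ x ≠ ⊤)
    (hxt : ∀ z, Ψ xt + ((1 / (2 * η) * ‖xt - (x - η • v)‖ ^ 2 : ℝ) : EReal) ≤
                Ψ z + ((1 / (2 * η) * ‖z - (x - η • v)‖ ^ 2 : ℝ) : EReal)) :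
    ((F (x + γ • (xt - x)) : ℝ) : EReal) + Ψ (x + γ • (xt - x)) ≤
      ((F x - (γ / η - L * γ ^ 2) * ‖xt - x‖ ^ 2 +
          (1 / (2 * L)) * ‖gradient F x - v‖ ^ 2 : ℝ) : EReal) + Ψ x := by
  have hη0 : η ≠ 0 := ne_of_gt hη
  set u : EuclideanSpace ℝ (Fin d) := x - η • v with hu
  set D : EuclideanSpace ℝ (Fin d) := xt - x with hD
  set g : EuclideanSpace ℝ (Fin d) := gradient F x with hg
  obtain ⟨a, ha⟩ : ∃ a : ℝ, Ψ x = (a : EReal) :=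
    ⟨(Ψ x).toReal, (EReal.coe_toReal hx (hne_bot x)).symm⟩
  have hxt_ne_top : Ψ xt ≠ ⊤ := by
    intro htop
    have := hxt x
    rw [htop, ha] at this
    simp [EReal.top_add_of_ne_bot] at this
    exact (EReal.coe_ne_top _) ((top_le_iff.mp (le_trans le_top this)))
  obtain ⟨b, hb⟩ : ∃ b : ℝ, Ψ xt = (b : EReal) :=
    ⟨(Ψ xt).toReal, (EReal.coe_toReal hxt_ne_top (hne_bot xt)).symm⟩
  -- strong prox inequality
  have hprox : b ≤ a - (1 / η) * ‖D‖ ^ 2 - ⟪v, D⟫ := by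
    have key : ∀ t : ℝ, 0 < t → t ≤ 1 →
        b ≤ (a - (1 / η) * ‖D‖ ^ 2 - ⟪v, D⟫) + t * (1 / (2 * η) * ‖D‖ ^ 2) := by
      intro t ht0 ht1
      have hz := hxt (t • x + (1 - t) • xt)
      have hc := hconv x xt t ht0.le ht1
      rw [ha, hb] at hc
      rw [hb] at hz
      have hz2 : ((b : EReal) + ((1 / (2 * η) * ‖xt - u‖ ^ 2 : ℝ) : EReal)) ≤
          ((t * a + (1 - t) * b : ℝ) : EReal) +
            ((1 / (2 * η) * ‖(t • x + (1 - t) • xt) - u‖ ^ 2 : ℝ) : EReal) := by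
        refine le_trans hz (add_le_add_left ?_ _)
        refine le_trans hc ?_
        rw [← EReal.coe_mul, ← EReal.coe_mul, ← EReal.coe_add]
      rw [← EReal.coe_add, ← EReal.coe_add, EReal.coe_le_coe_iff] at hz2
      have hpt : (t • x + (1 - t) • xt) - u = (xt - u) + t • (x - xt) := by
        module
      have hexp : ‖(t • x + (1 - t) • xt) - u‖ ^ 2 =
          ‖xt - u‖ ^ 2 + 2 * (t * ⟪xt - u, x - xt⟫) + t ^ 2 * ‖x - xt‖ ^ 2 := by
        rw [hpt, norm_add_sq_real, real_inner_smul_right, norm_smul]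
        simp [abs_of_nonneg ht0.le]
        ring
      rw [hexp] at hz2
      have h3 : t * b ≤
          t * (a + (1 / η) * ⟪xt - u, x - xt⟫ + t * (1 / (2 * η) * ‖x - xt‖ ^ 2)) := by
        ring_nf at hz2 ⊢
        linarith
      have hdiv := le_of_mul_le_mul_left h3 ht0
      have hinner : (1 / η) * ⟪xt - u, x - xt⟫ = -((1 / η) * ‖D‖ ^ 2) - ⟪v, D⟫ := by
        have h1 : xt - u = D + η • v := by rw [hu, hD]; module
        have h2 : x - xt = -D := by rw [hD]; module
        rw [h1, h2, inner_neg_right, inner_add_left, real_inner_smul_left,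
          real_inner_self_eq_norm_sq]
        field_simp
        ring
      have hnx : ‖x - xt‖ ^ 2 = ‖D‖ ^ 2 := by
        rw [show x - xt = -D by rw [hD]; module, norm_neg]
      rw [hinner, hnx] at hdiv
      linarith
    have := tend_aux (by positivity) key
    linarith
  -- descent lemma
  have hdesc : F (x + γ • D) ≤ F x + γ * ⟪g, D⟫ + L / 2 * γ ^ 2 * ‖D‖ ^ 2 := by
    have h0 := descent_aux F L hL hF hFlip x (γ • D)
    rw [real_inner_smul_right, norm_smul, Real.norm_eq_abs, mul_pow, sq_abs] at h0
    linarith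
  -- Young's inequality
  have hyoung : γ * ⟪g - v, D⟫ ≤ L * γ ^ 2 / 2 * ‖D‖ ^ 2 + 1 / (2 * L) * ‖g - v‖ ^ 2 := by
    have h1 : ⟪g - v, D⟫ ≤ ‖g - v‖ * ‖D‖ := real_inner_le_norm _ _
    have h2 : γ * ⟪g - v, D⟫ ≤ γ * (‖g - v‖ * ‖D‖) := mul_le_mul_of_nonneg_left h1 hγ0
    have h2L : (0:ℝ) < 2 * L := by linarith
    have h4 : γ * (‖g - v‖ * ‖D‖) ≤ L * γ ^ 2 / 2 * ‖D‖ ^ 2 + 1 / (2 * L) * ‖g - v‖ ^ 2 := by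
      rw [← mul_le_mul_iff_right₀ h2L]
      have he : 2 * L * (L * γ ^ 2 / 2 * ‖D‖ ^ 2 + 1 / (2 * L) * ‖g - v‖ ^ 2) =
          L ^ 2 * γ ^ 2 * ‖D‖ ^ 2 + ‖g - v‖ ^ 2 := by
        field_simp
      rw [he]
      nlinarith [sq_nonneg (L * γ * ‖D‖ - ‖g - v‖)]
    exact le_trans h2 h4
  -- convexity at the new point
  have hpsplus : Ψ (x + γ • D) ≤ ((γ * b + (1 - γ) * a : ℝ) : EReal) := by
    have hcv := hconv xt x γ hγ0 hγ1
    rw [ha, hb] at hcv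
    have hpt : γ • xt + (1 - γ) • x = x + γ • D := by rw [hD]; module
    rw [hpt] at hcv
    refine le_trans hcv ?_
    rw [← EReal.coe_mul, ← EReal.coe_mul, ← EReal.coe_add]
  -- combine everything over the reals
  have hreal : F (x + γ • D) + (γ * b + (1 - γ) * a) ≤
      (F x - (γ / η - L * γ ^ 2) * ‖D‖ ^ 2 + 1 / (2 * L) * ‖g - v‖ ^ 2) + a := by
    have hps : γ * b ≤ γ * (a - (1 / η) * ‖D‖ ^ 2 - ⟪v, D⟫) :=
      mul_le_mul_of_nonneg_left hprox hγ0
    have hgd : γ * ⟪g, D⟫ = γ * ⟪v, D⟫ + γ * ⟪g - v, D⟫ := by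
      rw [inner_sub_left]; ring
    ring_nf at hdesc hyoung hps hgd ⊢
    linarith
  calc ((F (x + γ • D) : ℝ) : EReal) + Ψ (x + γ • D)
      ≤ ((F (x + γ • D) : ℝ) : EReal) + ((γ * b + (1 - γ) * a : ℝ) : EReal) :=
        add_le_add_right hpsplus _
    _ = ((F (x + γ • D) + (γ * b + (1 - γ) * a) : ℝ) : EReal) := by
        norm_cast
    _ ≤ ((F x - (γ / η - L * γ ^ 2) * ‖D‖ ^ 2 + 1 / (2 * L) * ‖g - v‖ ^ 2 + a : ℝ) : EReal) := by
        exact_mod_cast hreal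
    _ = ((F x - (γ / η - L * γ ^ 2) * ‖D‖ ^ 2 + 1 / (2 * L) * ‖g - v‖ ^ 2 : ℝ) : EReal) + Ψ x := by
        rw [ha, EReal.coe_add]
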